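/- arXiv:1503.07834 — 3 statements merged into one kernel-verified Lean document; each statement's English description precedes it below -/
import Mathlib

section
/- Let a and d be nonzero complex numbers. Then there exists a positive integer m such that for every positive integer k, either (d^m)^k/(a^m) is not a root of unity, or (d^m)^k/(a^m) = 1. -/
lemma aux_div_pow (a d : ℂ) (m k : ℕ) :
    (d ^ m) ^ k / a ^ m = (d ^ k / a) ^ m := by
  rw [div_pow, ← pow_mul, ← pow_mul, mul_comm]

theorem stmt_0 (a d : ℂ) (ha : a ≠ 0) (hd : d ≠ 0) :
    ∃ m : ℕ, 0 < m ∧ ∀ k : ℕ, 0 < k →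
      (¬ ∃ n : ℕ, 0 < n ∧ ((d ^ m) ^ k / a ^ m) ^ n = 1) ∨
      (d ^ m) ^ k / a ^ m = 1 := by
  by_cases hdru : ∃ r : ℕ, 0 < r ∧ d ^ r = 1
  · obtain ⟨r, hr, hdr⟩ := hdru
    by_cases haru : ∃ s : ℕ, 0 < s ∧ a ^ s = 1
    · obtain ⟨s, hs, has⟩ := haru
      refine ⟨r * s, Nat.mul_pos hr hs, fun k hk => Or.inr ?_⟩
      have h1 : d ^ (r * s) = 1 := by rw [pow_mul, hdr, one_pow]
      have h2 : a ^ (r * s) = 1 := by rw [mul_comm, pow_mul, has, one_pow]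
      rw [h1, h2, one_pow, div_one]
    · refine ⟨r, hr, fun k hk => Or.inl ?_⟩
      rintro ⟨n, hn, hpow⟩
      apply haru
      rw [hdr, one_pow, one_div, inv_pow, inv_eq_one] at hpow
      exact ⟨r * n, Nat.mul_pos hr hn, by rwa [pow_mul]⟩
  · push_neg at hdru
    by_cases hk0 : ∃ k : ℕ, 0 < k ∧ ∃ n : ℕ, 0 < n ∧ (d ^ k / a) ^ n = 1
    · obtain ⟨k0, hk0pos, n0, hn0, hpow⟩ := hk0
      refine ⟨n0, hn0, fun k hk => ?_⟩
      by_cases hkk : k = k0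
      · right
        rw [hkk, aux_div_pow, hpow]
      · left
        rintro ⟨n, hn, h⟩
        rw [aux_div_pow, ← pow_mul] at h
        -- h : (d ^ k / a) ^ (n0 * n) = 1
        have h2 : (d ^ k0 / a) ^ (n0 * n) = 1 := by
          rw [pow_mul, hpow, one_pow]
        have hane : a ^ (n0 * n) ≠ 0 := pow_ne_zero _ ha
        have hk1 : (d ^ k) ^ (n0 * n) = a ^ (n0 * n) := by
          rw [div_pow, div_eq_one_iff_eq hane] at h; exact h
        have hk2 : (d ^ k0) ^ (n0 * n) = a ^ (n0 * n) := by
          rw [div_pow, div_eq_one_iff_eq hane] at h2; exact h2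
        have heq : d ^ (k * (n0 * n)) = d ^ (k0 * (n0 * n)) := by
          rw [← pow_mul] at hk1 hk2
          rw [hk1, hk2]
        rcases lt_or_gt_of_ne hkk with hlt | hgt
        · have : d ^ ((k0 - k) * (n0 * n)) = 1 := by
            have hdd : d ^ (k * (n0 * n)) ≠ 0 := pow_ne_zero _ hd
            have : d ^ (k * (n0 * n)) * d ^ ((k0 - k) * (n0 * n)) =
                d ^ (k * (n0 * n)) * 1 := by
              rw [mul_one, ← pow_add, ← add_mul, Nat.add_sub_cancel' hlt.le, heq]
            exact mul_left_cancel₀ hdd this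
          exact hdru _ (Nat.mul_pos (Nat.sub_pos_of_lt hlt) (Nat.mul_pos hn0 hn)) this
        · have : d ^ ((k - k0) * (n0 * n)) = 1 := by
            have hdd : d ^ (k0 * (n0 * n)) ≠ 0 := pow_ne_zero _ hd
            have : d ^ (k0 * (n0 * n)) * d ^ ((k - k0) * (n0 * n)) =
                d ^ (k0 * (n0 * n)) * 1 := by
              rw [mul_one, ← pow_add, ← add_mul, Nat.add_sub_cancel' hgt.le, heq]
            exact mul_left_cancel₀ hdd this
          exact hdru _ (Nat.mul_pos (Nat.sub_pos_of_lt hgt) (Nat.mul_pos hn0 hn)) this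
    · push_neg at hk0
      refine ⟨1, one_pos, fun k hk => Or.inl ?_⟩
      rintro ⟨n, hn, h⟩
      rw [aux_div_pow, ← pow_mul, one_mul] at h
      exact hk0 k hk n hn h
end

section
/- Let k be an algebraically closed field of characteristic 0, K/k a field extension, and r : K → K a shifting automorphism over k. Then for every integer m ≥ 1, the iterate r^m : K → K is also shifting over k. -/
/-- `α_r(f,n) = f · r(f) ⋯ r^{n-1}(f)`. -/
def alpha {K : Type*} [Field K] (r : K ≃+* K) (f : K) (n : ℕ) : K :=
  ∏ i ∈ Finset.range n, (r ^ i) f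

/-- `r : K ≃+* K` is a shifting automorphism over `k`: it fixes `k` pointwise,
and satisfies conditions (S1) and (S2). -/
def IsShifting (k : Type*) {K : Type*} [Field k] [Field K] [Algebra k K]
    (r : K ≃+* K) : Prop :=
  (∀ x : k, r (algebraMap k K x) = algebraMap k K x) ∧
  (∀ f : K, f ≠ 0 → ∀ n : ℕ, 1 ≤ n → alpha r f n = 1 →
      ∃ c : k, algebraMap k K c = f ∧ c ^ n = 1) ∧
  (∀ f : K, f ≠ 0 → (∃ n : ℕ, 1 ≤ n ∧ (f / r f) ^ n = 1) → f / r f = 1)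

section Aux

variable {K : Type*} [Field K] (r : K ≃+* K)

lemma pow_apply_pow (a b : ℕ) (f : K) : (r ^ a) ((r ^ b) f) = (r ^ (a + b)) f := by
  rw [pow_add]; rfl

lemma alpha_zero (f : K) : alpha r f 0 = 1 := Finset.prod_range_zero _

lemma alpha_succ (f : K) (n : ℕ) : alpha r f (n + 1) = alpha r f n * (r ^ n) f :=
  Finset.prod_range_succ _ _

lemma alpha_one_eq (n : ℕ) : alpha r 1 n = 1 := by
  simp [alpha]

lemma alpha_pow (f : K) (a n : ℕ) : (alpha r f a) ^ n = alpha r (f ^ n) a := by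
  simp [alpha, ← Finset.prod_pow, map_pow]

lemma alpha_mul_eq (f : K) (m n : ℕ) :
    alpha r f (m * n) = ∏ i ∈ Finset.range m, (r ^ i) (alpha (r ^ m) f n) := by
  induction n with
  | zero => simp [alpha]
  | succ n ih =>
      have h1 : m * (n + 1) = m * n + m := by ring
      rw [h1]
      have h2 : alpha r f (m * n + m) = alpha r f (m * n) *
          ∏ i ∈ Finset.range m, (r ^ (m * n + i)) f := by
        unfold alpha
        rw [Finset.prod_range_add]
      rw [h2, ih, alpha_succ, ← Finset.prod_mul_distrib]
      refine Finset.prod_congr rfl fun i _ => ?_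
      rw [map_mul]
      congr 1
      rw [← pow_mul, pow_apply_pow]
      congr 1
      ring_nf

lemma alpha_div_eq (f : K) (hf : f ≠ 0) (a : ℕ) :
    alpha r (f / r f) a = f / (r ^ a) f := by
  induction a with
  | zero =>
      rw [alpha_zero, pow_zero]
      show (1 : K) = f / f
      rw [div_self hf]
  | succ a ih =>
      have hra : (r ^ a) f ≠ 0 := by
        exact (map_ne_zero (r ^ a)).mpr hf
      have key : (r ^ (a + 1)) f = (r ^ a) (r f) := by rw [pow_succ]; rfl
      rw [alpha_succ, ih, map_div₀, key, div_mul_div_comm, mul_comm f ((r ^ a) f),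
        mul_div_mul_left _ _ hra]

lemma pow_fixes {k : Type*} [Field k] [Algebra k K]
    (hfix : ∀ x : k, r (algebraMap k K x) = algebraMap k K x) (j : ℕ) (x : k) :
    (r ^ j) (algebraMap k K x) = algebraMap k K x := by
  induction j with
  | zero => rfl
  | succ j ih =>
      rw [pow_succ']
      show r ((r ^ j) (algebraMap k K x)) = algebraMap k K x
      rw [ih, hfix]

end Aux

theorem stmt_12 {k K : Type*} [Field k] [Field K] [Algebra k K]
    [IsAlgClosed k] [CharZero k]
    (r : K ≃+* K) (hr : IsShifting k r) (m : ℕ) (hm : 1 ≤ m) :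
    IsShifting k (r ^ m) := by
  obtain ⟨hfix, hS1, hS2⟩ := hr
  refine ⟨fun x => pow_fixes r hfix m x, ?_, ?_⟩
  · -- (S1)
    intro f hf n hn hA
    have h1 : alpha r f (m * n) = 1 := by
      rw [alpha_mul_eq, hA]
      simp
    have hmn : 1 ≤ m * n := Nat.one_le_iff_ne_zero.mpr (by positivity)
    obtain ⟨c, hc, -⟩ := hS1 f hf (m * n) hmn h1
    refine ⟨c, hc, ?_⟩
    have hfn : f ^ n = 1 := by
      rw [← hA]
      unfold alpha
      rw [Finset.prod_congr rfl (fun i _ => ?_), Finset.prod_const,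
        Finset.card_range]
      rw [← hc, ← pow_mul, pow_fixes r hfix _ c]
    have : algebraMap k K (c ^ n) = algebraMap k K 1 := by
      rw [map_pow, hc, hfn, map_one]
    exact (algebraMap k K).injective this
  · -- (S2)
    intro f hf ⟨n, hn, hpow⟩
    have hrf0 : r f ≠ 0 := by simp [map_ne_zero, hf]
    have hg0 : f / r f ≠ 0 := div_ne_zero hf hrf0
    have hdiv : f / (r ^ m) f = alpha r (f / r f) m := (alpha_div_eq r f hf m).symm
    have h1 : alpha r ((f / r f) ^ n) m = 1 := by rw [← alpha_pow, ← hdiv, hpow]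
    obtain ⟨c, hc, hcm⟩ := hS1 _ (pow_ne_zero n hg0) m hm h1
    have hgnm : (f / r f) ^ (n * m) = 1 := by rw [pow_mul, ← hc, ← map_pow, hcm, map_one]
    have hgone : f / r f = 1 :=
      hS2 f hf ⟨n * m, Nat.one_le_iff_ne_zero.mpr (by positivity), hgnm⟩
    rw [hdiv, hgone, alpha_one_eq]
end

section
/- Let k be an algebraically closed field of characteristic 0, K/k an extension, and r : K → K a shifting automorphism over k. If α_r(f,n) = ω_k · τ_{r^n}(g) is an r^n-root of unity, then f = ζ · τ_r(g) for some root of unity ζ ∈ k; i.e., f is an r-root of unity. -/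
lemma alpha_add' {K : Type*} [Field K] (r : K ≃+* K) (x : K) (a b : ℕ) :
    alpha r x (a + b) = alpha r x a * (r ^ a) (alpha r x b) := by
  unfold alpha
  rw [Finset.prod_range_add, map_prod]
  congr 1
  refine Finset.prod_congr rfl fun i _ => ?_
  have : (r ^ a) ((r ^ i) x) = ((r ^ a) * (r ^ i)) x := rfl
  rw [this, ← pow_add]

lemma alpha_mul' {K : Type*} [Field K] (r : K ≃+* K) (x y : K) (n : ℕ) :
    alpha r (x * y) n = alpha r x n * alpha r y n := by
  unfold alpha
  rw [← Finset.prod_mul_distrib]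
  exact Finset.prod_congr rfl fun i _ => map_mul _ _ _

lemma alpha_tau' {K : Type*} [Field K] (r : K ≃+* K) (g : K) (hg : g ≠ 0) (n : ℕ) :
    alpha r (g / r g) n = g / (r ^ n) g := by
  induction n with
  | zero =>
      simp only [alpha, Finset.range_zero, Finset.prod_empty, pow_zero]
      exact (div_self hg).symm
  | succ n ih =>
      have h1 : alpha r (g / r g) 1 = g / r g := by
        simp only [alpha, Finset.range_one, Finset.prod_singleton, pow_zero]
        rfl
      rw [alpha_add' r _ n 1, ih, h1, map_div₀]
      have h2 : (r ^ n) (r g) = (r ^ (n + 1)) g := by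
        rw [pow_succ]; rfl
      rw [h2]
      have hn0 : ((r ^ n : K ≃+* K) g) ≠ 0 := by
        exact (map_ne_zero _).mpr hg
      have hn1 : ((r ^ (n + 1) : K ≃+* K) g) ≠ 0 := by
        exact (map_ne_zero _).mpr hg
      field_simp

theorem stmt_15 {k K : Type*} [Field k] [Field K] [Algebra k K]
    [IsAlgClosed k] [CharZero k]
    (r : K ≃+* K) (hr : IsShifting k r)
    (f g : K) (hf : f ≠ 0) (hg : g ≠ 0) (n : ℕ) (hn : 1 ≤ n)
    (ω : k) (hω : ∃ m : ℕ, 1 ≤ m ∧ ω ^ m = 1)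
    (hα : alpha r f n = algebraMap k K ω * (g / (r ^ n) g)) :
    ∃ ζ : k, (∃ m : ℕ, 1 ≤ m ∧ ζ ^ m = 1) ∧ f = algebraMap k K ζ * (g / r g) := by
  obtain ⟨hfix, hS1, _⟩ := hr
  obtain ⟨m, hm, hωm⟩ := hω
  have hrg : r g ≠ 0 := by simpa using hg
  have hrng : (r ^ n) g ≠ 0 := by exact (map_ne_zero _).mpr hg
  -- F = f · r(g)/g
  set F : K := f * (r g / g) with hF
  have hF0 : F ≠ 0 := by
    apply mul_ne_zero hf (div_ne_zero hrg hg)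
  have hfFτ : f = F * (g / r g) := by
    field_simp [hF]
    rw [hF, mul_assoc, div_mul_cancel₀ _ hg]
  -- α_r(F, n) = ω
  have hαF : alpha r F n = algebraMap k K ω := by
    have hτ : alpha r (g / r g) n = g / (r ^ n) g := alpha_tau' r g hg n
    have hmulτ : alpha r f n = alpha r F n * (g / (r ^ n) g) := by
      rw [hfFτ, alpha_mul', hτ]
    rw [hmulτ] at hα
    have hne : g / (r ^ n) g ≠ 0 := div_ne_zero hg hrng
    exact mul_right_cancel₀ hne hα
  -- r^j fixes k
  have hfixpow : ∀ (j : ℕ) (x : k), (r ^ j) (algebraMap k K x) = algebraMap k K x := by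
    intro j x
    induction j with
    | zero => rfl
    | succ j ih =>
        rw [pow_succ]
        show (r ^ j) (r (algebraMap k K x)) = algebraMap k K x
        rw [hfix, ih]
  -- α_r(F, n*j) = ω^j
  have key : ∀ j : ℕ, alpha r F (n * j) = algebraMap k K (ω ^ j) := by
    intro j
    induction j with
    | zero => simp [alpha]
    | succ j ih =>
        rw [Nat.mul_succ, alpha_add', ih, hαF, hfixpow, pow_succ, map_mul]
  have hα1 : alpha r F (n * m) = 1 := by
    rw [key m, hωm, map_one]
  have hnm : 1 ≤ n * m := Nat.one_le_iff_ne_zero.mpr (by positivity)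
  obtain ⟨c, hc, hcpow⟩ := hS1 F hF0 (n * m) hnm hα1
  exact ⟨c, ⟨n * m, hnm, hcpow⟩, by rw [hc, ← hfFτ]⟩
end
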